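/- Let A be an n-dimensional nilpotent complex Leibniz algebra with dim(A/A²) = 1. Then the nilindex of A equals n + 1; that is, A^n ≠ 0 and A^{n+1} = 0, and moreover dim(A^k/A^{k+1}) = 1 for every 1 ≤ k ≤ n. -/
import Mathlib

/-- A complex Leibniz algebra structure on a vector space `V`: a bilinear bracket
satisfying the Leibniz identity `[x,[y,z]] = [[x,y],z] − [[x,z],y]`. -/
structure LeibnizAlg (V : Type*) [AddCommGroup V] [Module ℂ V] where
  br : V →ₗ[ℂ] V →ₗ[ℂ] V
  leibniz : ∀ x y z : V, br x (br y z) = br (br x y) z - br (br x z) y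

namespace LeibnizAlg

variable {V : Type*} [AddCommGroup V] [Module ℂ V]

/-- The span of all products `[u,v]` with `u ∈ S`, `v ∈ T`. -/
def prodSpan (A : LeibnizAlg V) (S T : Submodule ℂ V) : Submodule ℂ V :=
  Submodule.span ℂ {z : V | ∃ u ∈ S, ∃ v ∈ T, z = A.br u v}

/-- `A.lcs k` is the `(k+1)`-st term `A^{k+1}` of the descending central series:
`A¹ = A`, `A^{k+1} = [A^k, A]`. -/
def lcs (A : LeibnizAlg V) : ℕ → Submodule ℂ V
  | 0 => ⊤
  | k + 1 => A.prodSpan (lcs A k) ⊤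

lemma prodSpan_mono (A : LeibnizAlg V) {S S' T T' : Submodule ℂ V} (hS : S ≤ S') (hT : T ≤ T') :
    A.prodSpan S T ≤ A.prodSpan S' T' :=
  Submodule.span_mono (by rintro z ⟨u, hu, v, hv, rfl⟩; exact ⟨u, hS hu, v, hT hv, rfl⟩)

lemma br_mem_prodSpan (A : LeibnizAlg V) {S T : Submodule ℂ V} {u v : V}
    (hu : u ∈ S) (hv : v ∈ T) : A.br u v ∈ A.prodSpan S T :=
  Submodule.subset_span ⟨u, hu, v, hv, rfl⟩

lemma lcs_succ_le (A : LeibnizAlg V) : ∀ k, A.lcs (k + 1) ≤ A.lcs k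
  | 0 => le_top
  | k + 1 => A.prodSpan_mono (lcs_succ_le A k) le_rfl

lemma lcs_antitone (A : LeibnizAlg V) : Antitone A.lcs :=
  antitone_nat_of_succ_le A.lcs_succ_le

lemma br_mem_lcs (A : LeibnizAlg V) {k : ℕ} {u : V} (v : V) (hu : u ∈ A.lcs k) :
    A.br u v ∈ A.lcs (k + 1) :=
  A.br_mem_prodSpan hu Submodule.mem_top

lemma br_lcs_one (A : LeibnizAlg V) {k : ℕ} {u v : V} (hu : u ∈ A.lcs k) (hv : v ∈ A.lcs 1) :
    A.br u v ∈ A.lcs (k + 2) := by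
  refine Submodule.span_induction (p := fun w _ => A.br u w ∈ A.lcs (k + 2)) ?_ ?_ ?_ ?_ hv
  · rintro _ ⟨y, -, z, -, rfl⟩
    rw [A.leibniz]
    exact sub_mem (A.br_mem_lcs z (A.br_mem_lcs y hu)) (A.br_mem_lcs y (A.br_mem_lcs z hu))
  · simp
  · intro a b _ _ ha hb; rw [map_add]; exact add_mem ha hb
  · intro c a _ ha; rw [map_smul]; exact Submodule.smul_mem _ _ ha

lemma exists_gen (A : LeibnizAlg V) (x : V) (hx : ⊤ ≤ A.lcs 1 ⊔ Submodule.span ℂ {x}) :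
    ∀ k, ∃ e ∈ A.lcs k, A.lcs k ≤ A.lcs (k + 1) ⊔ Submodule.span ℂ {e}
  | 0 => ⟨x, Submodule.mem_top, hx⟩
  | k + 1 => by
    obtain ⟨e, he, hle⟩ := A.exists_gen x hx k
    refine ⟨A.br e x, A.br_mem_lcs x he, ?_⟩
    show A.prodSpan (A.lcs k) ⊤ ≤ _
    refine Submodule.span_le.mpr ?_
    rintro _ ⟨u, hu, v, -, rfl⟩
    obtain ⟨u1, hu1, u2, hu2, rfl⟩ := Submodule.mem_sup.mp (hle hu)
    obtain ⟨c, rfl⟩ := Submodule.mem_span_singleton.mp hu2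
    obtain ⟨v1, hv1, v2, hv2, rfl⟩ := Submodule.mem_sup.mp (hx (Submodule.mem_top (x := v)))
    obtain ⟨d, rfl⟩ := Submodule.mem_span_singleton.mp hv2
    have key : A.br (u1 + c • e) (v1 + d • x)
        = (A.br u1 (v1 + d • x) + c • A.br e v1) + (c * d) • A.br e x := by
      simp only [map_add, map_smul, LinearMap.add_apply, LinearMap.smul_apply, smul_add,
        mul_smul, smul_comm d c]
      abel
    rw [key]
    refine Submodule.add_mem _ (Submodule.mem_sup_left ?_)
      (Submodule.mem_sup_right (Submodule.smul_mem _ _ (Submodule.mem_span_singleton_self _)))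
    exact add_mem (A.br_mem_lcs _ hu1) (Submodule.smul_mem _ _ (A.br_lcs_one he hv1))
  termination_by k => k

lemma lcs_stab (A : LeibnizAlg V) {k : ℕ} (h : A.lcs (k + 1) = A.lcs k) :
    ∀ m, k ≤ m → A.lcs m = A.lcs k := by
  intro m hm
  induction m, hm using Nat.le_induction with
  | base => rfl
  | succ m hm ih =>
    show A.prodSpan (A.lcs m) ⊤ = _
    rw [ih]
    exact h

lemma lcs_strict (A : LeibnizAlg V) (hnil : ∃ s, A.lcs s = ⊥) {k : ℕ} (hk : A.lcs k ≠ ⊥) :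
    A.lcs (k + 1) < A.lcs k := by
  obtain ⟨s, hs⟩ := hnil
  refine lt_of_le_of_ne (A.lcs_succ_le k) ?_
  intro heq
  have h1 := A.lcs_stab heq (max k s) (le_max_left _ _)
  have h2 : A.lcs (max k s) ≤ A.lcs s := A.lcs_antitone (le_max_right _ _)
  rw [hs, le_bot_iff, h1] at h2
  exact hk h2

open Module in
lemma finrank_span_singleton_le' (e : V) :
    finrank ℂ (Submodule.span ℂ ({e} : Set V)) ≤ 1 := by
  rcases eq_or_ne e 0 with rfl | he
  · rw [Submodule.span_zero_singleton]
    simp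
  · rw [finrank_span_singleton he]

open Module in
lemma finrank_drop (A : LeibnizAlg V) [FiniteDimensional ℂ V] (hnil : ∃ s, A.lcs s = ⊥)
    (x : V) (hx : ⊤ ≤ A.lcs 1 ⊔ Submodule.span ℂ {x}) {k : ℕ} (hk : A.lcs k ≠ ⊥) :
    finrank ℂ (A.lcs (k + 1)) + 1 = finrank ℂ (A.lcs k) := by
  obtain ⟨e, he, hle⟩ := A.exists_gen x hx k
  have h1 : finrank ℂ (A.lcs (k + 1)) < finrank ℂ (A.lcs k) :=
    Submodule.finrank_lt_finrank_of_lt (A.lcs_strict hnil hk)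
  have h2 : finrank ℂ (A.lcs k) ≤ finrank ℂ (A.lcs (k + 1)) + 1 := by
    calc finrank ℂ (A.lcs k)
        ≤ finrank ℂ ((A.lcs (k + 1) ⊔ Submodule.span ℂ {e} : Submodule ℂ V)) :=
          Submodule.finrank_mono hle
      _ ≤ finrank ℂ (A.lcs (k + 1)) + finrank ℂ (Submodule.span ℂ ({e} : Set V)) :=
          Submodule.finrank_add_le_finrank_add_finrank _ _
      _ ≤ finrank ℂ (A.lcs (k + 1)) + 1 := by
          have := finrank_span_singleton_le' e
          omega
  omega

open Module in
lemma finrank_lcs (A : LeibnizAlg V) [FiniteDimensional ℂ V] {n : ℕ}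
    (hn : finrank ℂ V = n) (hnil : ∃ s, A.lcs s = ⊥)
    (x : V) (hx : ⊤ ≤ A.lcs 1 ⊔ Submodule.span ℂ {x}) :
    ∀ k, k ≤ n → finrank ℂ (A.lcs k) = n - k := by
  intro k
  induction k with
  | zero =>
    intro _
    show finrank ℂ (⊤ : Submodule ℂ V) = n
    rw [finrank_top, hn]
  | succ k ih =>
    intro hk
    have h1 : finrank ℂ (A.lcs k) = n - k := ih (by omega)
    have hne : A.lcs k ≠ ⊥ := by
      intro hb
      rw [hb, finrank_bot] at h1
      omega
    have := A.finrank_drop hnil x hx hne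
    omega

end LeibnizAlg

/-- An `n`-dimensional nilpotent complex Leibniz algebra with
`dim(A/A²) = 1` has nilindex `n + 1`: `A^n ≠ 0`, `A^{n+1} = 0`, and
`dim(A^k/A^{k+1}) = 1` for `1 ≤ k ≤ n`.  (Here `A.lcs k = A^{k+1}`.) -/
theorem statement15 {V : Type*} [AddCommGroup V] [Module ℂ V] [FiniteDimensional ℂ V]
    (A : LeibnizAlg V) (n : ℕ)
    (hn : Module.finrank ℂ V = n)
    (hnil : ∃ s, A.lcs s = ⊥)
    (h1 : Module.finrank ℂ (V ⧸ A.lcs 1) = 1) :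
    A.lcs (n - 1) ≠ ⊥ ∧ A.lcs n = ⊥ ∧
    ∀ k : ℕ, 1 ≤ k → k ≤ n →
      Module.finrank ℂ (A.lcs (k - 1) ⧸ (A.lcs k).comap (A.lcs (k - 1)).subtype) = 1 := by
  -- find a generator x
  obtain ⟨v, hv0, hvspan⟩ := finrank_eq_one_iff'.mp h1
  obtain ⟨x, rfl⟩ := Submodule.Quotient.mk_surjective _ v
  have hx : (⊤ : Submodule ℂ V) ≤ A.lcs 1 ⊔ Submodule.span ℂ {x} := by
    intro w _
    obtain ⟨c, hc⟩ := hvspan (Submodule.Quotient.mk w)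
    rw [← Submodule.Quotient.mk_smul, Submodule.Quotient.eq] at hc
    refine Submodule.mem_sup.mpr ⟨w - c • x, ?_, c • x, Submodule.smul_mem _ _
      (Submodule.mem_span_singleton_self x), by abel⟩
    have := (A.lcs 1).neg_mem hc
    simpa using this
  have hn1 : 1 ≤ n := by
    have := Submodule.finrank_quotient_le (A.lcs 1)
    omega
  have hd := A.finrank_lcs hn hnil x hx
  have hbot : A.lcs n = ⊥ := by
    have := hd n le_rfl
    simp only [Nat.sub_self] at this
    exact Submodule.finrank_eq_zero.mp this
  have hne : A.lcs (n - 1) ≠ ⊥ := by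
    intro hb
    have := hd (n - 1) (by omega)
    rw [hb, finrank_bot] at this
    omega
  refine ⟨hne, hbot, fun k hk1 hkn => ?_⟩
  have hle : A.lcs k ≤ A.lcs (k - 1) := A.lcs_antitone (by omega)
  have heq := Submodule.finrank_quotient_add_finrank ((A.lcs k).comap (A.lcs (k - 1)).subtype)
  have hcomap : Module.finrank ℂ ((A.lcs k).comap (A.lcs (k - 1)).subtype)
      = Module.finrank ℂ (A.lcs k) :=
    (Submodule.comapSubtypeEquivOfLe hle).finrank_eq
  have h2 := hd k hkn
  have h3 := hd (k - 1) (by omega)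
  rw [hcomap, h2, h3] at heq
  omega
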